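/- arXiv:2005.14577 — 2 statements merged into one kernel-verified Lean document; each statement's English description precedes it below -/
import Mathlib

section
/- Let R be a commutative ring with a distinguished invertible element q^{1/2} (write q = (q^{1/2})^2), let r ≥ 1, and let Q be an antisymmetric r×r integer matrix. Then the quantum torus T(Q) is a free R-module, and the set of normalized monomials { x^k : k ∈ ℤ^r } is a free R-module basis of T(Q). -/
open scoped BigOperators Matrix

/-- Defining relations of the quantum torus `T(Q)` over a commutative ring `R`
with distinguished invertible element `sqq = q^{1/2}` (so `q = sqq^2`):
generators `x_i = ι (Sum.inl i)` and their inverses `x_i⁻¹ = ι (Sum.inr i)`,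
relations `x_i x_i⁻¹ = x_i⁻¹ x_i = 1` and `x_i x_j = q^{Q i j} x_j x_i`. -/
inductive QTRel (R : Type) [CommRing R] (sqq : Rˣ) {r : ℕ} (Q : Matrix (Fin r) (Fin r) ℤ) :
    FreeAlgebra R (Fin r ⊕ Fin r) → FreeAlgebra R (Fin r ⊕ Fin r) → Prop
  | mul_inv (i : Fin r) :
      QTRel R sqq Q (FreeAlgebra.ι R (Sum.inl i) * FreeAlgebra.ι R (Sum.inr i)) 1
  | inv_mul (i : Fin r) :
      QTRel R sqq Q (FreeAlgebra.ι R (Sum.inr i) * FreeAlgebra.ι R (Sum.inl i)) 1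
  | qcomm (i j : Fin r) :
      QTRel R sqq Q (FreeAlgebra.ι R (Sum.inl i) * FreeAlgebra.ι R (Sum.inl j))
        (((sqq ^ (2 * Q i j) : Rˣ) : R) •
          (FreeAlgebra.ι R (Sum.inl j) * FreeAlgebra.ι R (Sum.inl i)))

/-- The quantum torus `T(Q)`. -/
def QuantumTorus (R : Type) [CommRing R] (sqq : Rˣ) {r : ℕ}
    (Q : Matrix (Fin r) (Fin r) ℤ) : Type :=
  RingQuot (QTRel R sqq Q)

noncomputable instance (R : Type) [CommRing R] (sqq : Rˣ) {r : ℕ}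
    (Q : Matrix (Fin r) (Fin r) ℤ) : Ring (QuantumTorus R sqq Q) :=
  inferInstanceAs (Ring (RingQuot (QTRel R sqq Q)))

noncomputable instance (R : Type) [CommRing R] (sqq : Rˣ) {r : ℕ}
    (Q : Matrix (Fin r) (Fin r) ℤ) : Algebra R (QuantumTorus R sqq Q) :=
  inferInstanceAs (Algebra R (RingQuot (QTRel R sqq Q)))

namespace QuantumTorus

variable {R : Type} [CommRing R] (sqq : Rˣ) {r : ℕ} (Q : Matrix (Fin r) (Fin r) ℤ)

/-- The generator `x_i` of the quantum torus. -/
noncomputable def X (i : Fin r) : QuantumTorus R sqq Q :=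
  RingQuot.mkAlgHom R (QTRel R sqq Q) (FreeAlgebra.ι R (Sum.inl i))

/-- The inverse generator `x_i⁻¹` of the quantum torus. -/
noncomputable def Xinv (i : Fin r) : QuantumTorus R sqq Q :=
  RingQuot.mkAlgHom R (QTRel R sqq Q) (FreeAlgebra.ι R (Sum.inr i))

/-- `x_i^k` for `k : ℤ`, using the inverse generator for negative powers. -/
noncomputable def genPow (i : Fin r) (k : ℤ) : QuantumTorus R sqq Q :=
  if 0 ≤ k then X sqq Q i ^ k.toNat else Xinv sqq Q i ^ (-k).toNat

end QuantumTorus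

/-- The pairing `⟨k,k'⟩_Q = ∑_{i,j} Q i j * k i * k' j`. -/
def quantumPairing {r : ℕ} (Q : Matrix (Fin r) (Fin r) ℤ) (k k' : Fin r → ℤ) : ℤ :=
  ∑ i, ∑ j, Q i j * k i * k' j

/-- The sum `∑_{i<j} Q i j * k i * k j` used to normalize monomials. -/
def quantumUpperSum {r : ℕ} (Q : Matrix (Fin r) (Fin r) ℤ) (k : Fin r → ℤ) : ℤ :=
  ∑ i, ∑ j, if i < j then Q i j * k i * k j else 0

/-- The normalized monomial
`x^k = q^{-(1/2) ∑_{i<j} Q i j k_i k_j} x_1^{k_1} ⋯ x_r^{k_r}`. -/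
noncomputable def QuantumTorus.monomial {R : Type} [CommRing R] (sqq : Rˣ) {r : ℕ}
    (Q : Matrix (Fin r) (Fin r) ℤ) (k : Fin r → ℤ) : QuantumTorus R sqq Q :=
  ((sqq ^ (-(quantumUpperSum Q k)) : Rˣ) : R) •
    ((List.finRange r).map (fun i => QuantumTorus.genPow sqq Q i (k i))).prod
section QTAux

open QuantumTorus

variable {R : Type} [CommRing R] (sqq : Rˣ) {r : ℕ} (Q : Matrix (Fin r) (Fin r) ℤ)

/-! ### Pairing lemmas -/

theorem qP_add_right (v a b : Fin r → ℤ) :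
    quantumPairing Q v (a + b) = quantumPairing Q v a + quantumPairing Q v b := by
  simp [quantumPairing, Pi.add_apply, mul_add, Finset.sum_add_distrib]

theorem qP_add_left (a b v : Fin r → ℤ) :
    quantumPairing Q (a + b) v = quantumPairing Q a v + quantumPairing Q b v := by
  simp [quantumPairing, Pi.add_apply, add_mul, mul_add, Finset.sum_add_distrib]

theorem qP_zero_right (v : Fin r → ℤ) : quantumPairing Q v 0 = 0 := by
  simp [quantumPairing]

theorem qP_zero_left (v : Fin r → ℤ) : quantumPairing Q 0 v = 0 := by
  simp [quantumPairing]

theorem qP_smul_right (m : ℤ) (v w : Fin r → ℤ) :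
    quantumPairing Q v (m • w) = m * quantumPairing Q v w := by
  simp only [quantumPairing, Pi.smul_apply, smul_eq_mul, Finset.mul_sum]
  refine Finset.sum_congr rfl fun i _ => Finset.sum_congr rfl fun j _ => by ring

theorem qP_neg_right (v w : Fin r → ℤ) :
    quantumPairing Q v (-w) = -quantumPairing Q v w := by
  have := qP_smul_right Q (-1) v w
  simpa using this

theorem qP_single_single (i j : Fin r) :
    quantumPairing Q (Pi.single i 1) (Pi.single j 1) = Q i j := by
  simp [quantumPairing, Pi.single_apply, mul_ite, ite_mul, Finset.sum_ite_eq]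

/-! ### The representation space and operators -/

local notation "V" => ((Fin r → ℤ) →₀ R)

/-- Left multiplication operator of the twisted group algebra, acting on `V`. -/
noncomputable def Lop (v : Fin r → ℤ) : Module.End R V :=
  Finsupp.lsum R fun k => ((sqq ^ quantumPairing Q v k : Rˣ) : R) • Finsupp.lsingle (v + k)

theorem Lop_single (v k : Fin r → ℤ) (c : R) :
    Lop sqq Q v (Finsupp.single k c)
      = ((sqq ^ quantumPairing Q v k : Rˣ) : R) • Finsupp.single (v + k) c := by
  simp [Lop]

theorem usmul_usmul {M : Type} [AddCommMonoid M] [Module R M] (a b : ℤ) (x : M) :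
    ((sqq ^ a : Rˣ) : R) • ((sqq ^ b : Rˣ) : R) • x = ((sqq ^ (a + b) : Rˣ) : R) • x := by
  rw [smul_smul, ← Units.val_mul, ← zpow_add]

theorem Lop_zero : Lop sqq Q 0 = 1 := by
  apply Finsupp.lhom_ext
  intro k c
  simp [Lop_single, qP_zero_left]

theorem Lop_mul (v w : Fin r → ℤ) :
    Lop sqq Q v * Lop sqq Q w
      = ((sqq ^ quantumPairing Q v w : Rˣ) : R) • Lop sqq Q (v + w) := by
  apply Finsupp.lhom_ext
  intro k c
  have h1 : quantumPairing Q v (w + k) + quantumPairing Q w k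
      = quantumPairing Q v w + quantumPairing Q (v + w) k := by
    rw [qP_add_right, qP_add_left]; ring
  calc (Lop sqq Q v * Lop sqq Q w) (Finsupp.single k c)
      = Lop sqq Q v (Lop sqq Q w (Finsupp.single k c)) := rfl
    _ = ((sqq ^ quantumPairing Q v (w + k) : Rˣ) : R) •
          ((sqq ^ quantumPairing Q w k : Rˣ) : R) • Finsupp.single (v + (w + k)) c := by
        rw [Lop_single, map_smul, Lop_single]
        rw [smul_comm]
    _ = (((sqq ^ quantumPairing Q v w : Rˣ) : R) • Lop sqq Q (v + w)) (Finsupp.single k c) := by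
        rw [usmul_usmul, h1, ← usmul_usmul]
        simp [Lop_single, add_assoc]

theorem Lop_pow (v : Fin r → ℤ) (h : quantumPairing Q v v = 0) (n : ℕ) :
    (Lop sqq Q v) ^ n = Lop sqq Q ((n : ℤ) • v) := by
  induction n with
  | zero => simpa using (Lop_zero sqq Q).symm
  | succ n ih =>
      have h2 : quantumPairing Q v ((n : ℤ) • v) = 0 := by rw [qP_smul_right, h, mul_zero]
      rw [pow_succ', ih, Lop_mul, h2]
      simp only [zpow_zero, Units.val_one, one_smul]
      congr 1
      push_cast
      rw [add_smul, one_smul, add_comm]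

theorem Lop_list_prod (vs : List (Fin r → ℤ)) :
    ∃ u : Rˣ, (vs.map (Lop sqq Q)).prod = ((u : Rˣ) : R) • Lop sqq Q vs.sum := by
  induction vs with
  | nil => exact ⟨1, by simp [(Lop_zero sqq Q).symm]⟩
  | cons v vs ih =>
      obtain ⟨u, hu⟩ := ih
      refine ⟨sqq ^ quantumPairing Q v vs.sum * u, ?_⟩
      rw [List.map_cons, List.prod_cons, hu, mul_smul_comm, Lop_mul, smul_smul]
      simp [List.sum_cons, Units.val_mul, mul_comm]

end QTAux
section QTAux2

open QuantumTorus

variable {R : Type} [CommRing R] (sqq : Rˣ) {r : ℕ} (Q : Matrix (Fin r) (Fin r) ℤ)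

theorem qP_smul_left (m : ℤ) (v w : Fin r → ℤ) :
    quantumPairing Q (m • v) w = m * quantumPairing Q v w := by
  simp only [quantumPairing, Pi.smul_apply, smul_eq_mul, Finset.mul_sum]
  refine Finset.sum_congr rfl fun i _ => Finset.sum_congr rfl fun j _ => by ring

theorem qP_neg_left (v w : Fin r → ℤ) :
    quantumPairing Q (-v) w = -quantumPairing Q v w := by
  have := qP_smul_left Q (-1) v w
  simpa using this

theorem Qdiag (hQ : Qᵀ = -Q) (i : Fin r) : Q i i = 0 := by
  have := congrFun (congrFun hQ i) i
  simp [Matrix.transpose_apply] at this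
  omega

theorem Qanti (hQ : Qᵀ = -Q) (i j : Fin r) : Q j i = -Q i j := by
  have := congrFun (congrFun hQ i) j
  simpa [Matrix.transpose_apply] using this

/-- The representation of the quantum torus on `(Fin r → ℤ) →₀ R`. -/
noncomputable def qtRep (hQ : Qᵀ = -Q) :
    QuantumTorus R sqq Q →ₐ[R] Module.End R ((Fin r → ℤ) →₀ R) :=
  RingQuot.liftAlgHom R ⟨FreeAlgebra.lift R
      (Sum.elim (fun i => Lop sqq Q (Pi.single i 1)) (fun i => Lop sqq Q (-Pi.single i 1))), by
    intro x y h
    induction h with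
    | mul_inv i =>
        rw [map_mul, map_one, FreeAlgebra.lift_ι_apply, FreeAlgebra.lift_ι_apply]
        simp only [Sum.elim_inl, Sum.elim_inr, Lop_mul, qP_neg_right, qP_single_single,
          Qdiag Q hQ, neg_zero, zpow_zero, Units.val_one, one_smul, add_neg_cancel, Lop_zero]
    | inv_mul i =>
        rw [map_mul, map_one, FreeAlgebra.lift_ι_apply, FreeAlgebra.lift_ι_apply]
        simp only [Sum.elim_inl, Sum.elim_inr, Lop_mul, qP_neg_left, qP_single_single,
          Qdiag Q hQ, neg_zero, zpow_zero, Units.val_one, one_smul, neg_add_cancel, Lop_zero]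
    | qcomm i j =>
        rw [map_mul, map_smul, map_mul, FreeAlgebra.lift_ι_apply, FreeAlgebra.lift_ι_apply]
        simp only [Sum.elim_inl, Lop_mul, qP_single_single]
        rw [usmul_usmul]
        have h1 : 2 * Q i j + Q j i = Q i j := by rw [Qanti Q hQ]; ring
        rw [h1, add_comm (Pi.single j 1)]⟩

theorem qtRep_X (hQ : Qᵀ = -Q) (i : Fin r) :
    qtRep sqq Q hQ (X sqq Q i) = Lop sqq Q (Pi.single i 1) := by
  rw [qtRep, X]
  exact (RingQuot.liftAlgHom_mkAlgHom_apply _ _ _ _).trans (FreeAlgebra.lift_ι_apply _ _)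

theorem qtRep_Xinv (hQ : Qᵀ = -Q) (i : Fin r) :
    qtRep sqq Q hQ (Xinv sqq Q i) = Lop sqq Q (-Pi.single i 1) := by
  rw [qtRep, Xinv]
  exact (RingQuot.liftAlgHom_mkAlgHom_apply _ _ _ _).trans (FreeAlgebra.lift_ι_apply _ _)

theorem qtRep_genPow (hQ : Qᵀ = -Q) (i : Fin r) (m : ℤ) :
    qtRep sqq Q hQ (genPow sqq Q i m) = Lop sqq Q (m • Pi.single i 1) := by
  have hp : quantumPairing Q (Pi.single i 1) (Pi.single i (1:ℤ)) = 0 := by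
    rw [qP_single_single, Qdiag Q hQ]
  by_cases hm : 0 ≤ m
  · rw [genPow, if_pos hm, map_pow, qtRep_X, Lop_pow _ _ _ hp, Int.toNat_of_nonneg hm]
  · have hp' : quantumPairing Q (-Pi.single i 1) (-Pi.single i (1:ℤ)) = 0 := by
      rw [qP_neg_left, qP_neg_right, hp, neg_neg]
    rw [genPow, if_neg hm, map_pow, qtRep_Xinv, Lop_pow _ _ _ hp']
    congr 1
    have : ((-m).toNat : ℤ) = -m := Int.toNat_of_nonneg (by omega)
    rw [this]
    ext j
    simp

theorem qtRep_monomial (hQ : Qᵀ = -Q) (k : Fin r → ℤ) :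
    ∃ u : Rˣ, qtRep sqq Q hQ (monomial sqq Q k) = ((u : Rˣ) : R) • Lop sqq Q k := by
  have hsum : ((List.finRange r).map fun i => k i • (Pi.single i 1 : Fin r → ℤ)).sum = k := by
    rw [← Fin.sum_univ_def]
    have : ∀ i : Fin r, k i • (Pi.single i 1 : Fin r → ℤ) = Pi.single i (k i) := by
      intro i; ext j; simp [Pi.single_apply, mul_ite]
    simp only [this]
    exact Finset.univ_sum_single k
  obtain ⟨u, hu⟩ := Lop_list_prod sqq Q ((List.finRange r).map fun i => k i • (Pi.single i 1 : Fin r → ℤ))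
  refine ⟨sqq ^ (-quantumUpperSum Q k) * u, ?_⟩
  rw [monomial, map_smul, map_list_prod, List.map_map]
  rw [List.map_map] at hu
  simp only [Function.comp_def] at hu ⊢
  simp only [qtRep_genPow sqq Q hQ]
  rw [hu, hsum, smul_smul, Units.val_mul]

end QTAux2
section QTAux3

open QuantumTorus

variable {R : Type} [CommRing R] (sqq : Rˣ) {r : ℕ} (Q : Matrix (Fin r) (Fin r) ℤ)

theorem usmul_shift {M : Type} [AddCommMonoid M] [Module R M] (a : ℤ) {x y : M}
    (h : x = ((sqq ^ a : Rˣ) : R) • y) : y = ((sqq ^ (-a) : Rˣ) : R) • x := by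
  rw [h, usmul_usmul]; simp

theorem X_mul_Xinv (i : Fin r) : X sqq Q i * Xinv sqq Q i = 1 := by
  have h := RingQuot.mkAlgHom_rel R (QTRel.mul_inv (R := R) (sqq := sqq) (Q := Q) i)
  rw [map_mul, map_one] at h
  exact h

theorem Xinv_mul_X (i : Fin r) : Xinv sqq Q i * X sqq Q i = 1 := by
  have h := RingQuot.mkAlgHom_rel R (QTRel.inv_mul (R := R) (sqq := sqq) (Q := Q) i)
  rw [map_mul, map_one] at h
  exact h

theorem X_mul_X (i j : Fin r) :
    X sqq Q i * X sqq Q j = ((sqq ^ (2 * Q i j) : Rˣ) : R) • (X sqq Q j * X sqq Q i) := by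
  have h := RingQuot.mkAlgHom_rel R (QTRel.qcomm (R := R) (sqq := sqq) (Q := Q) i j)
  rw [map_mul, map_smul, map_mul] at h
  exact h

theorem X_mul_Xinv' (i j : Fin r) :
    X sqq Q i * Xinv sqq Q j
      = ((sqq ^ (-(2 * Q i j)) : Rˣ) : R) • (Xinv sqq Q j * X sqq Q i) := by
  apply usmul_shift
  have e1 : Xinv sqq Q j * (X sqq Q i * X sqq Q j) * Xinv sqq Q j
      = Xinv sqq Q j * X sqq Q i := by
    rw [mul_assoc, mul_assoc, X_mul_Xinv, mul_one]
  have e2 : Xinv sqq Q j * (X sqq Q j * X sqq Q i) * Xinv sqq Q j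
      = X sqq Q i * Xinv sqq Q j := by
    rw [← mul_assoc, Xinv_mul_X, one_mul]
  calc Xinv sqq Q j * X sqq Q i
      = Xinv sqq Q j * (X sqq Q i * X sqq Q j) * Xinv sqq Q j := e1.symm
    _ = Xinv sqq Q j * (((sqq ^ (2 * Q i j) : Rˣ) : R) • (X sqq Q j * X sqq Q i))
          * Xinv sqq Q j := by rw [X_mul_X]
    _ = ((sqq ^ (2 * Q i j) : Rˣ) : R) •
          (Xinv sqq Q j * (X sqq Q j * X sqq Q i) * Xinv sqq Q j) := by
        rw [mul_smul_comm, smul_mul_assoc]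
    _ = ((sqq ^ (2 * Q i j) : Rˣ) : R) • (X sqq Q i * Xinv sqq Q j) := by rw [e2]

theorem Xinv_mul_Xinv (i j : Fin r) :
    Xinv sqq Q i * Xinv sqq Q j
      = ((sqq ^ (2 * Q i j) : Rˣ) : R) • (Xinv sqq Q j * Xinv sqq Q i) := by
  have h : Xinv sqq Q j * Xinv sqq Q i
      = ((sqq ^ (-(2 * Q i j)) : Rˣ) : R) • (Xinv sqq Q i * Xinv sqq Q j) := by
    have e1 : Xinv sqq Q i * (X sqq Q i * Xinv sqq Q j) * Xinv sqq Q i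
        = Xinv sqq Q j * Xinv sqq Q i := by
      rw [← mul_assoc, Xinv_mul_X, one_mul]
    have e2 : Xinv sqq Q i * (Xinv sqq Q j * X sqq Q i) * Xinv sqq Q i
        = Xinv sqq Q i * Xinv sqq Q j := by
      rw [mul_assoc, mul_assoc, X_mul_Xinv, mul_one]
    calc Xinv sqq Q j * Xinv sqq Q i
        = Xinv sqq Q i * (X sqq Q i * Xinv sqq Q j) * Xinv sqq Q i := e1.symm
      _ = Xinv sqq Q i * (((sqq ^ (-(2 * Q i j)) : Rˣ) : R) • (Xinv sqq Q j * X sqq Q i))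
            * Xinv sqq Q i := by rw [X_mul_Xinv']
      _ = ((sqq ^ (-(2 * Q i j)) : Rˣ) : R) •
            (Xinv sqq Q i * (Xinv sqq Q j * X sqq Q i) * Xinv sqq Q i) := by
          rw [mul_smul_comm, smul_mul_assoc]
      _ = ((sqq ^ (-(2 * Q i j)) : Rˣ) : R) • (Xinv sqq Q i * Xinv sqq Q j) := by rw [e2]
  have := usmul_shift sqq _ h
  simpa using this

theorem Xinv_mul_X' (i j : Fin r) :
    Xinv sqq Q i * X sqq Q j
      = ((sqq ^ (2 * Q j i) : Rˣ) : R) • (X sqq Q j * Xinv sqq Q i) := by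
  have h := X_mul_Xinv' sqq Q j i
  have := usmul_shift sqq _ h
  simpa using this

theorem mul_pow_swap {a b : QuantumTorus R sqq Q} {c : R} (h : a * b = c • (b * a))
    (n : ℕ) : a * b ^ n = c ^ n • (b ^ n * a) := by
  induction n with
  | zero => simp
  | succ n ih =>
      rw [pow_succ', ← mul_assoc, h, smul_mul_assoc, mul_assoc, ih,
        mul_smul_comm, smul_smul, ← mul_assoc, ← pow_succ']

theorem X_swap_genPow (i j : Fin r) (m : ℤ) :
    ∃ u : Rˣ, X sqq Q i * genPow sqq Q j m = ((u : Rˣ) : R) • (genPow sqq Q j m * X sqq Q i) := by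
  by_cases hm : 0 ≤ m
  · refine ⟨(sqq ^ (2 * Q i j)) ^ m.toNat, ?_⟩
    rw [genPow, if_pos hm]
    simpa [Units.val_pow_eq_pow_val] using mul_pow_swap sqq Q (X_mul_X sqq Q i j) m.toNat
  · refine ⟨(sqq ^ (-(2 * Q i j))) ^ (-m).toNat, ?_⟩
    rw [genPow, if_neg hm]
    simpa [Units.val_pow_eq_pow_val] using mul_pow_swap sqq Q (X_mul_Xinv' sqq Q i j) (-m).toNat

theorem Xinv_swap_genPow (i j : Fin r) (m : ℤ) :
    ∃ u : Rˣ, Xinv sqq Q i * genPow sqq Q j m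
      = ((u : Rˣ) : R) • (genPow sqq Q j m * Xinv sqq Q i) := by
  by_cases hm : 0 ≤ m
  · refine ⟨(sqq ^ (2 * Q j i)) ^ m.toNat, ?_⟩
    rw [genPow, if_pos hm]
    simpa [Units.val_pow_eq_pow_val] using mul_pow_swap sqq Q (Xinv_mul_X' sqq Q i j) m.toNat
  · refine ⟨(sqq ^ (2 * Q i j)) ^ (-m).toNat, ?_⟩
    rw [genPow, if_neg hm]
    simpa [Units.val_pow_eq_pow_val] using mul_pow_swap sqq Q (Xinv_mul_Xinv sqq Q i j) (-m).toNat

theorem X_mul_genPow_self (i : Fin r) (m : ℤ) :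
    X sqq Q i * genPow sqq Q i m = genPow sqq Q i (m + 1) := by
  by_cases hm : 0 ≤ m
  · rw [genPow, if_pos hm, genPow, if_pos (by omega), ← pow_succ']
    congr 1
    omega
  · by_cases hm1 : m = -1
    · subst hm1
      norm_num [genPow, X_mul_Xinv]
    · rw [genPow, if_neg hm, genPow, if_neg (by omega)]
      have hn : (-m).toNat = (-(m + 1)).toNat + 1 := by omega
      rw [hn, pow_succ', ← mul_assoc, X_mul_Xinv, one_mul]

theorem Xinv_mul_genPow_self (i : Fin r) (m : ℤ) :
    Xinv sqq Q i * genPow sqq Q i m = genPow sqq Q i (m - 1) := by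
  by_cases hm : 0 ≤ m
  · by_cases hm0 : m = 0
    · subst hm0
      norm_num [genPow, pow_one]
    · rw [genPow, if_pos hm, genPow, if_pos (by omega)]
      have hn : m.toNat = (m - 1).toNat + 1 := by omega
      rw [hn, pow_succ', ← mul_assoc, Xinv_mul_X, one_mul]
  · rw [genPow, if_neg hm, genPow, if_neg (by omega)]
    have hn : (-(m - 1)).toNat = (-m).toNat + 1 := by omega
    rw [hn, pow_succ']

theorem X_mul_map_prod (i : Fin r) :
    ∀ (L : List (Fin r)) (f : Fin r → ℤ), L.count i = 1 →
    ∃ u : Rˣ, X sqq Q i * (L.map fun j => genPow sqq Q j (f j)).prod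
      = ((u : Rˣ) : R) •
          (L.map fun j => genPow sqq Q j (Function.update f i (f i + 1) j)).prod
  | [], f, h => by simp at h
  | (j :: L), f, h => by
    rw [List.map_cons, List.prod_cons, List.map_cons, List.prod_cons]
    by_cases hj : j = i
    · subst hj
      have hL : j ∉ L := by
        rw [List.count_cons_self] at h
        simp [← List.count_pos_iff]
        omega
      refine ⟨1, ?_⟩
      rw [← mul_assoc, X_mul_genPow_self, Function.update_self]
      have : (L.map fun a => genPow sqq Q a (Function.update f j (f j + 1) a))
          = L.map fun a => genPow sqq Q a (f a) := by
        apply List.map_congr_left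
        intro a ha
        rw [Function.update_of_ne (by rintro rfl; exact hL ha)]
      rw [this, Units.val_one, one_smul]
    · have hcount : L.count i = 1 := by
        rwa [List.count_cons_of_ne (by exact fun hh => hj hh)] at h
      obtain ⟨u1, hu1⟩ := X_swap_genPow sqq Q i j (f j)
      obtain ⟨u2, hu2⟩ := X_mul_map_prod i L f hcount
      refine ⟨u1 * u2, ?_⟩
      rw [← mul_assoc, hu1, smul_mul_assoc, mul_assoc, hu2, mul_smul_comm, smul_smul,
        ← Units.val_mul, Function.update_of_ne hj]

theorem Xinv_mul_map_prod (i : Fin r) :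
    ∀ (L : List (Fin r)) (f : Fin r → ℤ), L.count i = 1 →
    ∃ u : Rˣ, Xinv sqq Q i * (L.map fun j => genPow sqq Q j (f j)).prod
      = ((u : Rˣ) : R) •
          (L.map fun j => genPow sqq Q j (Function.update f i (f i - 1) j)).prod
  | [], f, h => by simp at h
  | (j :: L), f, h => by
    rw [List.map_cons, List.prod_cons, List.map_cons, List.prod_cons]
    by_cases hj : j = i
    · subst hj
      have hL : j ∉ L := by
        rw [List.count_cons_self] at h
        simp [← List.count_pos_iff]
        omega
      refine ⟨1, ?_⟩
      rw [← mul_assoc, Xinv_mul_genPow_self, Function.update_self]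
      have : (L.map fun a => genPow sqq Q a (Function.update f j (f j - 1) a))
          = L.map fun a => genPow sqq Q a (f a) := by
        apply List.map_congr_left
        intro a ha
        rw [Function.update_of_ne (by rintro rfl; exact hL ha)]
      rw [this, Units.val_one, one_smul]
    · have hcount : L.count i = 1 := by
        rwa [List.count_cons_of_ne (by exact fun hh => hj hh)] at h
      obtain ⟨u1, hu1⟩ := Xinv_swap_genPow sqq Q i j (f j)
      obtain ⟨u2, hu2⟩ := Xinv_mul_map_prod i L f hcount
      refine ⟨u1 * u2, ?_⟩
      rw [← mul_assoc, hu1, smul_mul_assoc, mul_assoc, hu2, mul_smul_comm, smul_smul,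
        ← Units.val_mul, Function.update_of_ne hj]

theorem X_mul_monomial (i : Fin r) (k : Fin r → ℤ) :
    ∃ u : Rˣ, X sqq Q i * monomial sqq Q k
      = ((u : Rˣ) : R) • monomial sqq Q (Function.update k i (k i + 1)) := by
  have hcount : (List.finRange r).count i = 1 :=
    List.count_eq_one_of_mem (List.nodup_finRange r) (List.mem_finRange i)
  obtain ⟨u, hu⟩ := X_mul_map_prod sqq Q i (List.finRange r) k hcount
  refine ⟨sqq ^ (-quantumUpperSum Q k) * u
    * (sqq ^ (-quantumUpperSum Q (Function.update k i (k i + 1))))⁻¹, ?_⟩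
  rw [monomial, mul_smul_comm, hu, smul_smul, monomial, smul_smul]
  congr 1
  simp only [Units.val_mul]
  rw [mul_assoc, Units.inv_mul, mul_one]

theorem Xinv_mul_monomial (i : Fin r) (k : Fin r → ℤ) :
    ∃ u : Rˣ, Xinv sqq Q i * monomial sqq Q k
      = ((u : Rˣ) : R) • monomial sqq Q (Function.update k i (k i - 1)) := by
  have hcount : (List.finRange r).count i = 1 :=
    List.count_eq_one_of_mem (List.nodup_finRange r) (List.mem_finRange i)
  obtain ⟨u, hu⟩ := Xinv_mul_map_prod sqq Q i (List.finRange r) k hcount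
  refine ⟨sqq ^ (-quantumUpperSum Q k) * u
    * (sqq ^ (-quantumUpperSum Q (Function.update k i (k i - 1))))⁻¹, ?_⟩
  rw [monomial, mul_smul_comm, hu, smul_smul, monomial, smul_smul]
  congr 1
  simp only [Units.val_mul]
  rw [mul_assoc, Units.inv_mul, mul_one]

theorem monomial_zero : monomial sqq Q (0 : Fin r → ℤ) = (1 : QuantumTorus R sqq Q) := by
  have h1 : quantumUpperSum Q (0 : Fin r → ℤ) = 0 := by simp [quantumUpperSum]
  have h2 : ∀ i : Fin r, genPow sqq Q i ((0 : Fin r → ℤ) i) = 1 := by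
    intro i; simp [genPow]
  rw [monomial, h1]
  simp only [h2, neg_zero, zpow_zero, Units.val_one, one_smul]
  rw [List.prod_eq_one]
  intro x hx
  simp only [List.mem_map] at hx
  obtain ⟨a, _, rfl⟩ := hx
  rfl

/-- `mkAlgHom` viewed as landing in the quantum torus. -/
noncomputable def qtMk : FreeAlgebra R (Fin r ⊕ Fin r) →ₐ[R] QuantumTorus R sqq Q :=
  RingQuot.mkAlgHom R (QTRel R sqq Q)

theorem qtMk_surjective : Function.Surjective (qtMk sqq Q (R := R)) :=
  RingQuot.mkAlgHom_surjective R (QTRel R sqq Q)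

theorem monomial_span_top :
    Submodule.span R (Set.range (monomial sqq Q : (Fin r → ℤ) → QuantumTorus R sqq Q)) = ⊤ := by
  set S := Submodule.span R
    (Set.range (monomial sqq Q : (Fin r → ℤ) → QuantumTorus R sqq Q)) with hS
  have hX : ∀ (i : Fin r) (s : QuantumTorus R sqq Q), s ∈ S → X sqq Q i * s ∈ S := by
    intro i s hs
    refine Submodule.span_induction ?_ ?_ ?_ ?_ hs
    · rintro x ⟨k, rfl⟩
      obtain ⟨u, hu⟩ := X_mul_monomial sqq Q i k
      rw [hu]
      exact S.smul_mem _ (Submodule.subset_span ⟨_, rfl⟩)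
    · rw [mul_zero]; exact S.zero_mem
    · intro x y _ _ hx hy; rw [mul_add]; exact S.add_mem hx hy
    · intro c x _ hx; rw [mul_smul_comm]; exact S.smul_mem c hx
  have hXinv : ∀ (i : Fin r) (s : QuantumTorus R sqq Q), s ∈ S → Xinv sqq Q i * s ∈ S := by
    intro i s hs
    refine Submodule.span_induction ?_ ?_ ?_ ?_ hs
    · rintro x ⟨k, rfl⟩
      obtain ⟨u, hu⟩ := Xinv_mul_monomial sqq Q i k
      rw [hu]
      exact S.smul_mem _ (Submodule.subset_span ⟨_, rfl⟩)
    · rw [mul_zero]; exact S.zero_mem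
    · intro x y _ _ hx hy; rw [mul_add]; exact S.add_mem hx hy
    · intro c x _ hx; rw [mul_smul_comm]; exact S.smul_mem c hx
  have key : ∀ a : FreeAlgebra R (Fin r ⊕ Fin r), ∀ s : QuantumTorus R sqq Q, s ∈ S →
      qtMk sqq Q a * s ∈ S := by
    intro a
    induction a using FreeAlgebra.induction with
    | grade0 c =>
        intro s hs
        rw [AlgHom.commutes, ← Algebra.smul_def]
        exact S.smul_mem c hs
    | grade1 x =>
        intro s hs
        cases x with
        | inl i => exact hX i s hs
        | inr i => exact hXinv i s hs
    | mul a b ha hb =>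
        intro s hs
        rw [map_mul, mul_assoc]
        exact ha _ (hb s hs)
    | add a b ha hb =>
        intro s hs
        rw [map_add, add_mul]
        exact S.add_mem (ha s hs) (hb s hs)
  rw [eq_top_iff]
  intro x _
  obtain ⟨a, rfl⟩ := qtMk_surjective sqq Q x
  have h1 : (1 : QuantumTorus R sqq Q) ∈ S := by
    rw [← monomial_zero sqq Q]
    exact Submodule.subset_span ⟨0, rfl⟩
  simpa using key a 1 h1

end QTAux3

/-- For a commutative ring `R` with distinguished invertible element
`q^{1/2}`, `r ≥ 1`, and an antisymmetric `r×r` integer matrix `Q`, the quantum torus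
`T(Q)` is a free `R`-module with basis the normalized monomials `{x^k : k ∈ ℤ^r}`. -/
theorem quantumTorus_monomials_basis (R : Type) [CommRing R] (sqq : Rˣ)
    (r : ℕ) (hr : 1 ≤ r) (Q : Matrix (Fin r) (Fin r) ℤ) (hQ : Qᵀ = -Q) :
    Module.Free R (QuantumTorus R sqq Q) ∧
      ∃ b : Module.Basis (Fin r → ℤ) R (QuantumTorus R sqq Q),
        ∀ k : Fin r → ℤ, b k = QuantumTorus.monomial sqq Q k := by
  classical
  choose u hu using fun k => qtRep_monomial sqq Q hQ k
  set ε : QuantumTorus R sqq Q →ₗ[R] ((Fin r → ℤ) →₀ R) :=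
    (LinearMap.applyₗ (Finsupp.single (0 : Fin r → ℤ) (1 : R))).comp
      (qtRep sqq Q hQ).toLinearMap with hεdef
  have hε : ∀ k, ε (QuantumTorus.monomial sqq Q k)
      = ((u k : Rˣ) : R) • Finsupp.single k (1 : R) := by
    intro k
    have h0 : ε (QuantumTorus.monomial sqq Q k)
        = qtRep sqq Q hQ (QuantumTorus.monomial sqq Q k) (Finsupp.single 0 1) := rfl
    rw [h0, hu k]
    rw [LinearMap.smul_apply, Lop_single]
    rw [qP_zero_right]
    simp
  have hli : LinearIndependent R (QuantumTorus.monomial sqq Q (R := R)) := by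
    apply LinearIndependent.of_comp ε
    have h2 : (⇑ε ∘ QuantumTorus.monomial sqq Q)
        = fun k => ((u k : Rˣ) : R) • Finsupp.single k (1 : R) := funext hε
    rw [h2]
    have h3 := (Finsupp.basisSingleOne (R := R)
      (ι := Fin r → ℤ)).linearIndependent.units_smul u
    have h4 : (u • ⇑(Finsupp.basisSingleOne (R := R) (ι := Fin r → ℤ)))
        = fun k => ((u k : Rˣ) : R) • Finsupp.single k (1 : R) := by
      funext k
      simp [Pi.smul_apply', Units.smul_def, Finsupp.coe_basisSingleOne]
    rwa [h4] at h3
  have hsp : ⊤ ≤ Submodule.span R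
      (Set.range (QuantumTorus.monomial sqq Q : (Fin r → ℤ) → QuantumTorus R sqq Q)) :=
    (monomial_span_top sqq Q).ge
  let b := Module.Basis.mk hli hsp
  exact ⟨Module.Free.of_basis b, b, fun k => Module.Basis.mk_apply hli hsp k⟩
end

section
/- Let R be a commutative ring with a distinguished invertible element q^{1/2} (write q = (q^{1/2})^2), let Q be an antisymmetric r×r integer matrix, and let N be a positive integer. Then there is an injective R-algebra homomorphism Φ_N : T(N²Q) → T(Q), called the N-th Frobenius homomorphism, determined by Φ_N(x_i) = x_i^N for i = 1, …, r, where T(N²Q) is the quantum torus associated to the antisymmetric matrix N²Q. -/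
open scoped BigOperators Matrix

-- === auxiliary development ===
namespace QTAux

variable {R : Type} [CommRing R]

/-- `u m = sqq ^ m` as an element of `R`. -/
noncomputable def uu (sqq : Rˣ) (m : ℤ) : R := ((sqq ^ m : Rˣ) : R)

lemma uu_mul (sqq : Rˣ) (m n : ℤ) : uu sqq m * uu sqq n = uu sqq (m + n) := by
  simp [uu, zpow_add]

lemma uu_zero (sqq : Rˣ) : uu sqq 0 = 1 := by simp [uu]

lemma uu_smul_smul (sqq : Rˣ) {A : Type} [AddCommMonoid A] [Module R A] (m n : ℤ) (x : A) :
    uu sqq m • uu sqq n • x = uu sqq (m + n) • x := by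
  rw [smul_smul, uu_mul]

lemma uu_cancel (sqq : Rˣ) {A : Type} [AddCommMonoid A] [Module R A] {m : ℤ} {x y : A}
    (h : y = uu sqq m • x) : x = uu sqq (-m) • y := by
  rw [h, uu_smul_smul, neg_add_cancel, uu_zero, one_smul]

/-- Generic: if `a b = c • (b a)` then `a^m b^n = c^{mn} • (b^n a^m)`. -/
lemma pow_comm_of_comm {A : Type} [Ring A] [Algebra R A] (sqq : Rˣ) (e : ℤ) {a b : A}
    (h : a * b = uu sqq e • (b * a)) (m n : ℕ) :
    a ^ m * b ^ n = uu sqq (e * m * n) • (b ^ n * a ^ m) := by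
  have key : ∀ m : ℕ, a ^ m * b = uu sqq (e * m) • (b * a ^ m) := by
    intro m
    induction m with
    | zero => simp [uu_zero]
    | succ m ih =>
      have he : (e : ℤ) * (m + 1 : ℕ) = e + e * m := by push_cast; ring
      calc a ^ (m + 1) * b = a ^ m * (a * b) := by rw [pow_succ, mul_assoc]
        _ = uu sqq e • (a ^ m * (b * a)) := by rw [h, mul_smul_comm]
        _ = uu sqq e • ((a ^ m * b) * a) := by rw [mul_assoc]
        _ = uu sqq e • (uu sqq (e * m) • ((b * a ^ m) * a)) := by rw [ih, smul_mul_assoc]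
        _ = uu sqq (e * (m + 1 : ℕ)) • (b * a ^ (m + 1)) := by
              rw [uu_smul_smul, mul_assoc, ← pow_succ, he]
  induction n with
  | zero => simp [uu_zero]
  | succ n ih =>
    have he : (e : ℤ) * m * (n + 1 : ℕ) = e * m * n + e * m := by push_cast; ring
    calc a ^ m * b ^ (n + 1) = (a ^ m * b ^ n) * b := by rw [pow_succ, mul_assoc]
      _ = uu sqq (e * m * n) • (b ^ n * (a ^ m * b)) := by
            rw [ih, smul_mul_assoc, mul_assoc (b ^ n) (a ^ m) b]
      _ = uu sqq (e * m * n) • (uu sqq (e * m) • (b ^ n * (b * a ^ m))) := by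
            rw [key m, mul_smul_comm]
      _ = uu sqq (e * m * (n + 1 : ℕ)) • (b ^ (n + 1) * a ^ m) := by
            rw [uu_smul_smul, ← mul_assoc, ← pow_succ, he]

/-- Generic: from `a b = c • (b a)`, `b b' = b' b = 1` conclude `b' a = c • (a b')`. -/
lemma inv_comm_of_comm {A : Type} [Ring A] [Algebra R A] {c : R} {a b b' : A}
    (h : a * b = c • (b * a)) (hb : b * b' = 1) (hb' : b' * b = 1) :
    b' * a = c • (a * b') := by
  have h1 : b' * (a * b) * b' = b' * a := by
    rw [← mul_assoc, mul_assoc (b' * a) b b', hb, mul_one]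
  calc b' * a = b' * (a * b) * b' := h1.symm
    _ = b' * (c • (b * a)) * b' := by rw [h]
    _ = c • (b' * (b * a) * b') := by rw [mul_smul_comm, smul_mul_assoc]
    _ = c • (a * b') := by rw [← mul_assoc b' b a, hb', one_mul]

open QuantumTorus

variable (sqq : Rˣ) {r : ℕ} (Q : Matrix (Fin r) (Fin r) ℤ)

/-- All generators, uniformly. -/
noncomputable def gen : Fin r ⊕ Fin r → QuantumTorus R sqq Q :=
  Sum.elim (X sqq Q) (Xinv sqq Q)

def sgn : Fin r ⊕ Fin r → ℤ := Sum.elim (fun _ => 1) (fun _ => -1)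

def idx : Fin r ⊕ Fin r → Fin r := Sum.elim id id

lemma gen_eq_mk (s : Fin r ⊕ Fin r) :
    gen sqq Q s = RingQuot.mkAlgHom R (QTRel R sqq Q) (FreeAlgebra.ι R s) := by
  cases s <;> rfl

lemma X_mul_Xinv (i : Fin r) : X sqq Q i * Xinv sqq Q i = 1 := by
  have := RingQuot.mkAlgHom_rel R (QTRel.mul_inv (R := R) (sqq := sqq) (Q := Q) i)
  simp only [map_mul, map_one] at this; exact this

lemma Xinv_mul_X (i : Fin r) : Xinv sqq Q i * X sqq Q i = 1 := by
  have := RingQuot.mkAlgHom_rel R (QTRel.inv_mul (R := R) (sqq := sqq) (Q := Q) i)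
  simp only [map_mul, map_one] at this; exact this

lemma X_comm (i j : Fin r) :
    X sqq Q i * X sqq Q j = uu sqq (2 * Q i j) • (X sqq Q j * X sqq Q i) := by
  have := RingQuot.mkAlgHom_rel R (QTRel.qcomm (R := R) (sqq := sqq) (Q := Q) i j)
  simp only [map_mul, map_smul] at this; exact this

lemma Xinv_comm_X (i j : Fin r) :
    Xinv sqq Q j * X sqq Q i = uu sqq (2 * Q i j) • (X sqq Q i * Xinv sqq Q j) :=
  inv_comm_of_comm (X_comm sqq Q i j) (X_mul_Xinv sqq Q j) (Xinv_mul_X sqq Q j)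

lemma Xinv_comm_Xinv (i j : Fin r) :
    Xinv sqq Q i * Xinv sqq Q j = uu sqq (2 * Q i j) • (Xinv sqq Q j * Xinv sqq Q i) :=
  inv_comm_of_comm (Xinv_comm_X sqq Q i j) (X_mul_Xinv sqq Q i) (Xinv_mul_X sqq Q i)

lemma Q_antisymm (hQ : Qᵀ = -Q) (i j : Fin r) : Q j i = - Q i j := by
  have := congrFun (congrFun hQ i) j
  simpa [Matrix.transpose_apply, Matrix.neg_apply] using this

lemma gen_comm (hQ : Qᵀ = -Q) (s t : Fin r ⊕ Fin r) :
    gen sqq Q s * gen sqq Q t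
      = uu sqq (2 * sgn s * sgn t * Q (idx s) (idx t)) • (gen sqq Q t * gen sqq Q s) := by
  cases s with
  | inl i =>
    cases t with
    | inl j =>
      have := X_comm sqq Q i j
      rw [show (2 * sgn (Sum.inl i : Fin r ⊕ Fin r) * sgn (Sum.inl j : Fin r ⊕ Fin r) *
        Q (idx (Sum.inl i)) (idx (Sum.inl j))) = 2 * Q i j by simp only [sgn, idx, Sum.elim_inl, id_eq]; ring]
      exact this
    | inr j =>
      have := uu_cancel sqq (Xinv_comm_X sqq Q i j)
      rw [show (2 * sgn (Sum.inl i : Fin r ⊕ Fin r) * sgn (Sum.inr j : Fin r ⊕ Fin r) *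
        Q (idx (Sum.inl i)) (idx (Sum.inr j))) = -(2 * Q i j) by simp only [sgn, idx, Sum.elim_inl, Sum.elim_inr, id_eq]; ring]
      exact this
  | inr i =>
    cases t with
    | inl j =>
      have := Xinv_comm_X sqq Q j i
      rw [show (2 * sgn (Sum.inr i : Fin r ⊕ Fin r) * sgn (Sum.inl j : Fin r ⊕ Fin r) *
        Q (idx (Sum.inr i)) (idx (Sum.inl j))) = 2 * Q j i by
          simp only [sgn, idx, Sum.elim_inl, Sum.elim_inr, id_eq, Q_antisymm Q hQ j i]; ring]
      exact this
    | inr j =>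
      have := Xinv_comm_Xinv sqq Q i j
      rw [show (2 * sgn (Sum.inr i : Fin r ⊕ Fin r) * sgn (Sum.inr j : Fin r ⊕ Fin r) *
        Q (idx (Sum.inr i)) (idx (Sum.inr j))) = 2 * Q i j by simp only [sgn, idx, Sum.elim_inr, id_eq]; ring]
      exact this

lemma gen_pow_comm (hQ : Qᵀ = -Q) (s t : Fin r ⊕ Fin r) (m n : ℕ) :
    gen sqq Q s ^ m * gen sqq Q t ^ n
      = uu sqq (2 * sgn s * sgn t * Q (idx s) (idx t) * m * n) •
        (gen sqq Q t ^ n * gen sqq Q s ^ m) :=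
  pow_comm_of_comm sqq _ (gen_comm sqq Q hQ s t) m n

end QTAux

namespace QTAux
open QuantumTorus
variable {R : Type} [CommRing R] (sqq : Rˣ) {r : ℕ} (Q : Matrix (Fin r) (Fin r) ℤ)

lemma gen_genPow_comm (hQ : Qᵀ = -Q) (s : Fin r ⊕ Fin r) (j : Fin r) (a : ℤ) :
    gen sqq Q s * genPow sqq Q j a
      = uu sqq (2 * sgn s * a * Q (idx s) j) • (genPow sqq Q j a * gen sqq Q s) := by
  unfold genPow
  split_ifs with h
  · have key := gen_pow_comm sqq Q hQ s (Sum.inl j) 1 a.toNat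
    rw [pow_one] at key
    have hg : gen sqq Q (Sum.inl j) = X sqq Q j := rfl
    rw [hg] at key
    rw [key]
    congr 2
    simp only [sgn, idx, Sum.elim_inl, id_eq]
    rw [Int.toNat_of_nonneg h]; push_cast; ring
  · have key := gen_pow_comm sqq Q hQ s (Sum.inr j) 1 (-a).toNat
    rw [pow_one] at key
    have hg : gen sqq Q (Sum.inr j) = Xinv sqq Q j := rfl
    rw [hg] at key
    rw [key]
    congr 2
    have : ((-a).toNat : ℤ) = -a := Int.toNat_of_nonneg (by omega)
    simp only [sgn, idx, Sum.elim_inr, id_eq]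
    rw [this]; push_cast; ring

lemma X_mul_genPow (i : Fin r) (a : ℤ) :
    X sqq Q i * genPow sqq Q i a = genPow sqq Q i (a + 1) := by
  unfold genPow
  split_ifs with h1 h2 h2
  · rw [show (a + 1).toNat = a.toNat + 1 by omega, pow_succ']
  · omega
  · have ha : a = -1 := by omega
    subst ha
    norm_num [X_mul_Xinv sqq Q i]
  · have h3 : (-a).toNat = (-(a + 1)).toNat + 1 := by omega
    rw [h3, pow_succ', ← mul_assoc, X_mul_Xinv, one_mul]

lemma Xinv_mul_genPow (i : Fin r) (a : ℤ) :
    Xinv sqq Q i * genPow sqq Q i a = genPow sqq Q i (a - 1) := by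
  unfold genPow
  split_ifs with h1 h2 h2
  · have h3 : a.toNat = (a - 1).toNat + 1 := by omega
    rw [h3, pow_succ', ← mul_assoc, Xinv_mul_X, one_mul]
  · have ha : a = 0 := by omega
    subst ha
    norm_num [Xinv_mul_X sqq Q i]
  · omega
  · rw [show (-(a - 1)).toNat = (-a).toNat + 1 by omega, pow_succ']

lemma gen_mul_genPow (s : Fin r ⊕ Fin r) (a : ℤ) :
    gen sqq Q s * genPow sqq Q (idx s) a = genPow sqq Q (idx s) (a + sgn s) := by
  cases s with
  | inl i => exact X_mul_genPow sqq Q i a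
  | inr i =>
    have := Xinv_mul_genPow sqq Q i a
    simpa [gen, sgn, idx, sub_eq_add_neg] using this

/-- `mkAlgHom` with codomain `QuantumTorus`. -/
noncomputable def mk' : FreeAlgebra R (Fin r ⊕ Fin r) →ₐ[R] QuantumTorus R sqq Q :=
  RingQuot.mkAlgHom R (QTRel R sqq Q)

lemma mk'_surjective : Function.Surjective (mk' sqq Q) :=
  RingQuot.mkAlgHom_surjective R (QTRel R sqq Q)

lemma gen_eq_mk' (s : Fin r ⊕ Fin r) :
    gen sqq Q s = mk' sqq Q (FreeAlgebra.ι R s) := by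
  cases s <;> rfl

/-- product of `genPow j (k j)` over a list of indices. -/
noncomputable def wp (k : Fin r → ℤ) (l : List (Fin r)) : QuantumTorus R sqq Q :=
  (l.map fun j => genPow sqq Q j (k j)).prod

lemma wp_nil (k : Fin r → ℤ) : wp sqq Q k [] = 1 := rfl

lemma wp_cons (k : Fin r → ℤ) (j : Fin r) (t : List (Fin r)) :
    wp sqq Q k (j :: t) = genPow sqq Q j (k j) * wp sqq Q k t := by
  simp [wp]

lemma wp_congr {k k' : Fin r → ℤ} {l : List (Fin r)} (h : ∀ j ∈ l, k j = k' j) :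
    wp sqq Q k l = wp sqq Q k' l := by
  unfold wp
  congr 1
  exact List.map_congr_left fun j hj => by rw [h j hj]

lemma gen_mul_wp (hQ : Qᵀ = -Q) (s : Fin r ⊕ Fin r) (k : Fin r → ℤ) :
    ∀ l : List (Fin r), l.Nodup → idx s ∈ l →
    ∃ c : ℤ, gen sqq Q s * wp sqq Q k l
      = uu sqq c • wp sqq Q (Function.update k (idx s) (k (idx s) + sgn s)) l := by
  intro l
  induction l with
  | nil => intro _ hmem; exact absurd hmem List.not_mem_nil
  | cons j t ih =>
    intro hnd hmem
    have hnd' := List.nodup_cons.mp hnd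
    by_cases hj : idx s = j
    · subst hj
      refine ⟨0, ?_⟩
      rw [wp_cons, ← mul_assoc, gen_mul_genPow, wp_cons, uu_zero, one_smul,
        Function.update_self]
      congr 1
      exact wp_congr sqq Q fun j' hj' => (Function.update_of_ne
        (fun h => hnd'.1 (by rw [h] at hj'; exact hj')) _ _).symm
    · have hmem' : idx s ∈ t := (List.mem_cons.mp hmem).resolve_left hj
      obtain ⟨c₂, h₂⟩ := ih hnd'.2 hmem'
      refine ⟨2 * sgn s * (k j) * Q (idx s) j + c₂, ?_⟩
      rw [wp_cons, ← mul_assoc, gen_genPow_comm sqq Q hQ s j (k j), smul_mul_assoc,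
        mul_assoc (genPow sqq Q j (k j)), h₂, mul_smul_comm, uu_smul_smul, wp_cons,
        Function.update_of_ne (fun h : j = idx s => hj h.symm)]

/-- The (un-normalized) ordered monomial `x^k`. -/
noncomputable def nf (k : Fin r → ℤ) : QuantumTorus R sqq Q :=
  wp sqq Q k (List.finRange r)

lemma nf_zero : nf sqq Q (0 : Fin r → ℤ) = 1 := by
  unfold nf wp
  refine List.prod_eq_one fun x hx => ?_
  simp only [List.mem_map] at hx
  obtain ⟨j, -, rfl⟩ := hx
  simp [genPow]

lemma gen_mul_nf (hQ : Qᵀ = -Q) (s : Fin r ⊕ Fin r) (k : Fin r → ℤ) :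
    ∃ c : ℤ, gen sqq Q s * nf sqq Q k
      = uu sqq c • nf sqq Q (Function.update k (idx s) (k (idx s) + sgn s)) :=
  gen_mul_wp sqq Q hQ s k (List.finRange r) (List.nodup_finRange r) (List.mem_finRange _)

/-- The span of the ordered monomials. -/
noncomputable def SS : Submodule R (QuantumTorus R sqq Q) :=
  Submodule.span R (Set.range (nf sqq Q))

lemma gen_mul_mem (hQ : Qᵀ = -Q) (s : Fin r ⊕ Fin r) {z : QuantumTorus R sqq Q}
    (hz : z ∈ SS sqq Q) : gen sqq Q s * z ∈ SS sqq Q := by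
  induction hz using Submodule.span_induction with
  | mem x hx =>
    obtain ⟨k, rfl⟩ := hx
    obtain ⟨c, hc⟩ := gen_mul_nf sqq Q hQ s k
    rw [hc]
    exact Submodule.smul_mem _ _ (Submodule.subset_span (Set.mem_range_self _))
  | zero => rw [mul_zero]; exact zero_mem _
  | add x y _ _ hx hy => rw [mul_add]; exact add_mem hx hy
  | smul c x _ hx => rw [mul_smul_comm]; exact Submodule.smul_mem _ _ hx

lemma mem_SS (hQ : Qᵀ = -Q) (z : QuantumTorus R sqq Q) : z ∈ SS sqq Q := by
  obtain ⟨y, rfl⟩ := mk'_surjective sqq Q z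
  have h1 : (1 : QuantumTorus R sqq Q) ∈ SS sqq Q := by
    rw [← nf_zero sqq Q]
    exact Submodule.subset_span (Set.mem_range_self _)
  have main : ∀ y : FreeAlgebra R (Fin r ⊕ Fin r), ∀ z ∈ SS sqq Q,
      mk' sqq Q y * z ∈ SS sqq Q := by
    intro y
    induction y using FreeAlgebra.induction with
    | grade0 c =>
      intro z hz
      rw [AlgHom.commutes, ← Algebra.smul_def]
      exact Submodule.smul_mem _ _ hz
    | grade1 x =>
      intro z hz
      rw [← gen_eq_mk']
      exact gen_mul_mem sqq Q hQ x hz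
    | mul a b ha hb =>
      intro z hz
      rw [map_mul, mul_assoc]
      exact ha _ (hb _ hz)
    | add a b ha hb =>
      intro z hz
      rw [map_add, add_mul]
      exact add_mem (ha _ hz) (hb _ hz)
  simpa using main y 1 h1

end QTAux

namespace QTAux
open QuantumTorus
variable {R : Type} [CommRing R] (sqq : Rˣ) {r : ℕ} (Q : Matrix (Fin r) (Fin r) ℤ)

@[simp] lemma sgn_inl (i : Fin r) : sgn (Sum.inl i : Fin r ⊕ Fin r) = 1 := rfl
@[simp] lemma sgn_inr (i : Fin r) : sgn (Sum.inr i : Fin r ⊕ Fin r) = -1 := rfl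
@[simp] lemma idx_inl (i : Fin r) : idx (Sum.inl i : Fin r ⊕ Fin r) = i := rfl
@[simp] lemma idx_inr (i : Fin r) : idx (Sum.inr i : Fin r ⊕ Fin r) = i := rfl

/-- The exponent used in the representation. -/
def phi (i : Fin r) (k : Fin r → ℤ) : ℤ := ∑ j, (if j < i then 2 * Q i j else 0) * k j

lemma phi_add (i : Fin r) (k k' : Fin r → ℤ) :
    phi Q i (k + k') = phi Q i k + phi Q i k' := by
  simp [phi, mul_add, Finset.sum_add_distrib]

lemma phi_zsmul (i : Fin r) (c : ℤ) (k : Fin r → ℤ) :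
    phi Q i (c • k) = c * phi Q i k := by
  simp only [phi, Pi.smul_apply, smul_eq_mul, Finset.mul_sum]
  exact Finset.sum_congr rfl fun j _ => by ring

lemma phi_single (i j : Fin r) :
    phi Q i (Pi.single j 1) = if j < i then 2 * Q i j else 0 := by
  simp [phi, Pi.single_apply, mul_ite, Finset.sum_ite_eq']

@[simp] lemma phi_self (i : Fin r) : phi Q i (Pi.single i (1 : ℤ)) = 0 := by
  simp [phi_single]

lemma Q_diag (hQ : Qᵀ = -Q) (i : Fin r) : Q i i = 0 := by
  have := Q_antisymm Q hQ i i
  omega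

lemma phi_key (hQ : Qᵀ = -Q) (i j : Fin r) :
    phi Q i (Pi.single j 1) = 2 * Q i j + phi Q j (Pi.single i 1) := by
  rw [phi_single, phi_single]
  rcases lt_trichotomy i j with h | h | h
  · rw [if_neg (by omega : ¬ j < i), if_pos h, Q_antisymm Q hQ j i]
    ring
  · subst h
    simp [Q_diag Q hQ i]
  · rw [if_pos h, if_neg (by omega : ¬ i < j)]
    ring

/-- Action of the generator `s` on the module `(Fin r → ℤ) →₀ R`. -/
noncomputable def aM (s : Fin r ⊕ Fin r) :
    ((Fin r → ℤ) →₀ R) →ₗ[R] ((Fin r → ℤ) →₀ R) :=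
  Finsupp.lift _ R _ fun k =>
    Finsupp.single (k + sgn s • Pi.single (idx s) 1) (uu sqq (sgn s * phi Q (idx s) k))

lemma aM_single (s : Fin r ⊕ Fin r) (k : Fin r → ℤ) (b : R) :
    aM sqq Q s (Finsupp.single k b)
      = Finsupp.single (k + sgn s • Pi.single (idx s) 1)
          (b * uu sqq (sgn s * phi Q (idx s) k)) := by
  rw [aM, Finsupp.lift_apply, Finsupp.sum_single_index (by simp), Finsupp.smul_single,
    smul_eq_mul]

lemma coeff_helper (b : R) (a₁ a₂ c a₃ a₄ : ℤ) (h : a₁ + a₂ = c + (a₃ + a₄)) :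
    b * uu sqq a₁ * uu sqq a₂ = uu sqq c * (b * uu sqq a₃ * uu sqq a₄) := by
  rw [mul_assoc, uu_mul, h, ← uu_mul, ← uu_mul]
  ring

/-- The free-algebra representation. -/
noncomputable def FF : FreeAlgebra R (Fin r ⊕ Fin r) →ₐ[R] Module.End R ((Fin r → ℤ) →₀ R) :=
  FreeAlgebra.lift R (aM sqq Q)

lemma FF_rel (hQ : Qᵀ = -Q) : ∀ ⦃x y : FreeAlgebra R (Fin r ⊕ Fin r)⦄,
    QTRel R sqq Q x y → FF sqq Q x = FF sqq Q y := by
  intro x y h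
  cases h with
  | mul_inv i =>
    rw [map_mul, map_one]
    unfold FF
    rw [FreeAlgebra.lift_ι_apply, FreeAlgebra.lift_ι_apply]
    refine Finsupp.lhom_ext fun k b => ?_
    rw [Module.End.mul_apply, Module.End.one_apply, aM_single, aM_single]
    have hk : k + (-1 : ℤ) • Pi.single i 1 + (1 : ℤ) • Pi.single i (1 : ℤ) = k := by
      simp
    have he : phi Q i (k + (-1 : ℤ) • Pi.single i 1) = phi Q i k := by
      rw [phi_add, phi_zsmul, phi_self]; ring
    simp only [sgn_inl, sgn_inr, idx_inl, idx_inr, hk, he, one_mul, neg_one_mul,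
      mul_assoc, uu_mul, neg_add_cancel, uu_zero, mul_one]
  | inv_mul i =>
    rw [map_mul, map_one]
    unfold FF
    rw [FreeAlgebra.lift_ι_apply, FreeAlgebra.lift_ι_apply]
    refine Finsupp.lhom_ext fun k b => ?_
    rw [Module.End.mul_apply, Module.End.one_apply, aM_single, aM_single]
    have hk : k + (1 : ℤ) • Pi.single i 1 + (-1 : ℤ) • Pi.single i (1 : ℤ) = k := by
      simp
    have he : phi Q i (k + (1 : ℤ) • Pi.single i 1) = phi Q i k := by
      rw [phi_add, phi_zsmul, phi_self]; ring
    simp only [sgn_inl, sgn_inr, idx_inl, idx_inr, hk, he, one_mul, neg_one_mul,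
      mul_assoc, uu_mul, add_neg_cancel, uu_zero, mul_one]
  | qcomm i j =>
    rw [map_mul, map_smul, map_mul]
    unfold FF
    rw [FreeAlgebra.lift_ι_apply, FreeAlgebra.lift_ι_apply]
    refine Finsupp.lhom_ext fun k b => ?_
    rw [Module.End.mul_apply, LinearMap.smul_apply, Module.End.mul_apply,
      aM_single, aM_single, aM_single, aM_single, Finsupp.smul_single, smul_eq_mul]
    have hk : k + (sgn (Sum.inl j : Fin r ⊕ Fin r)) • Pi.single (idx (Sum.inl j : Fin r ⊕ Fin r)) (1:ℤ)
        + (sgn (Sum.inl i : Fin r ⊕ Fin r)) • Pi.single (idx (Sum.inl i : Fin r ⊕ Fin r)) (1:ℤ)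
        = k + (sgn (Sum.inl i : Fin r ⊕ Fin r)) • Pi.single (idx (Sum.inl i : Fin r ⊕ Fin r)) (1:ℤ)
        + (sgn (Sum.inl j : Fin r ⊕ Fin r)) • Pi.single (idx (Sum.inl j : Fin r ⊕ Fin r)) (1:ℤ) := by
      simp only [sgn_inl, idx_inl, one_smul]
      abel
    rw [hk]
    congr 1
    simp only [sgn_inl, idx_inl, one_mul, one_smul]
    refine coeff_helper sqq b _ _ _ _ _ ?_
    rw [phi_add Q i, phi_add Q j, phi_key Q hQ i j]
    ring

/-- The representation of the quantum torus. -/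
noncomputable def rep (hQ : Qᵀ = -Q) :
    QuantumTorus R sqq Q →ₐ[R] Module.End R ((Fin r → ℤ) →₀ R) :=
  RingQuot.liftAlgHom R ⟨FF sqq Q, FF_rel sqq Q hQ⟩

lemma rep_mk' (hQ : Qᵀ = -Q) (y : FreeAlgebra R (Fin r ⊕ Fin r)) :
    rep sqq Q hQ (mk' sqq Q y) = FF sqq Q y :=
  RingQuot.liftAlgHom_mkAlgHom_apply R (FF sqq Q) (FF_rel sqq Q hQ) y

lemma rep_gen (hQ : Qᵀ = -Q) (s : Fin r ⊕ Fin r) :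
    rep sqq Q hQ (gen sqq Q s) = aM sqq Q s := by
  rw [gen_eq_mk', rep_mk']
  exact FreeAlgebra.lift_ι_apply _ _

lemma aM_pow_single (s : Fin r ⊕ Fin r) (n : ℕ) (m : Fin r → ℤ) (b : R) :
    (aM sqq Q s ^ n) (Finsupp.single m b)
      = Finsupp.single (m + (n : ℤ) • (sgn s • Pi.single (idx s) 1))
          (b * uu sqq ((n : ℤ) * (sgn s * phi Q (idx s) m))) := by
  induction n with
  | zero => simp [uu_zero]
  | succ n ih =>
    rw [pow_succ', Module.End.mul_apply, ih, aM_single]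
    have he : phi Q (idx s) (m + (n : ℤ) • (sgn s • Pi.single (idx s) 1))
        = phi Q (idx s) m := by
      rw [phi_add, phi_zsmul, phi_zsmul, phi_self]
      ring
    rw [he]
    have hk : m + (n : ℤ) • (sgn s • Pi.single (idx s) 1) + sgn s • Pi.single (idx s) 1
        = m + ((n + 1 : ℕ) : ℤ) • (sgn s • Pi.single (idx s) 1) := by
      push_cast
      rw [add_smul, one_smul]
      abel
    rw [hk, mul_assoc, uu_mul]
    congr 2
    push_cast
    ring

lemma rep_genPow (hQ : Qᵀ = -Q) (i : Fin r) (a : ℤ) (m : Fin r → ℤ) (b : R) :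
    rep sqq Q hQ (genPow sqq Q i a) (Finsupp.single m b)
      = Finsupp.single (m + a • Pi.single i (1 : ℤ)) (b * uu sqq (a * phi Q i m)) := by
  unfold genPow
  split_ifs with h
  · have hX : X sqq Q i = gen sqq Q (Sum.inl i) := rfl
    rw [hX, map_pow, rep_gen, aM_pow_single]
    have hna : ((a.toNat : ℤ)) = a := Int.toNat_of_nonneg h
    simp only [sgn_inl, idx_inl, one_smul, one_mul, hna]
  · have hX : Xinv sqq Q i = gen sqq Q (Sum.inr i) := rfl
    rw [hX, map_pow, rep_gen, aM_pow_single]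
    have hna : (((-a).toNat : ℤ)) = -a := Int.toNat_of_nonneg (by omega)
    simp only [sgn_inr, idx_inr, hna, smul_smul, neg_mul, neg_neg, mul_one, one_mul]
    rw [show -(a * -1) = a by ring, show -(a * -phi Q i m) = a * phi Q i m by ring]

end QTAux

namespace QTAux
open QuantumTorus
variable {R : Type} [CommRing R] (sqq : Rˣ) {r : ℕ} (Q : Matrix (Fin r) (Fin r) ℤ)

lemma rep_wp (hQ : Qᵀ = -Q) (k : Fin r → ℤ) :
    ∀ (l : List (Fin r)) (m : Fin r → ℤ),
    ∃ c : ℤ, rep sqq Q hQ (wp sqq Q k l) (Finsupp.single m 1)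
      = Finsupp.single (m + (l.map fun j => k j • Pi.single j (1 : ℤ)).sum) (uu sqq c) := by
  intro l
  induction l with
  | nil =>
    intro m
    refine ⟨0, ?_⟩
    rw [wp_nil, map_one, Module.End.one_apply, uu_zero]
    simp
  | cons j t ih =>
    intro m
    obtain ⟨c, hc⟩ := ih m
    refine ⟨c + k j * phi Q j (m + (t.map fun j' => k j' • Pi.single j' (1 : ℤ)).sum), ?_⟩
    rw [wp_cons, map_mul, Module.End.mul_apply, hc, rep_genPow sqq Q hQ, uu_mul]
    congr 1
    rw [List.map_cons, List.sum_cons]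
    abel

lemma rep_nf (hQ : Qᵀ = -Q) (k : Fin r → ℤ) :
    ∃ c : ℤ, rep sqq Q hQ (nf sqq Q k) (Finsupp.single 0 1)
      = Finsupp.single k (uu sqq c) := by
  obtain ⟨c, hc⟩ := rep_wp sqq Q hQ k (List.finRange r) 0
  refine ⟨c, ?_⟩
  unfold nf
  rw [hc]
  congr 1
  rw [zero_add]
  rw [show ((List.finRange r).map fun j => k j • Pi.single j (1 : ℤ)).sum
      = ∑ j, k j • Pi.single j (1 : ℤ) from (Fin.sum_univ_def _).symm]
  ext x
  simp [Pi.single_apply, mul_ite, Finset.sum_ite_eq']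

/-- the exponent of the unit in `rep (nf k) e₀ = sqq^(cf k) • e_k`. -/
noncomputable def cf (hQ : Qᵀ = -Q) (k : Fin r → ℤ) : ℤ := (rep_nf sqq Q hQ k).choose

lemma cf_spec (hQ : Qᵀ = -Q) (k : Fin r → ℤ) :
    rep sqq Q hQ (nf sqq Q k) (Finsupp.single 0 1)
      = Finsupp.single k (uu sqq (cf sqq Q hQ k)) := (rep_nf sqq Q hQ k).choose_spec

/-- Left inverse of the evaluation map. -/
noncomputable def leftInv (hQ : Qᵀ = -Q) :
    ((Fin r → ℤ) →₀ R) →ₗ[R] QuantumTorus R sqq Q :=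
  Finsupp.lift _ R _ fun k => uu sqq (-(cf sqq Q hQ k)) • nf sqq Q k

lemma leftInv_single (hQ : Qᵀ = -Q) (k : Fin r → ℤ) (b : R) :
    leftInv sqq Q hQ (Finsupp.single k b)
      = b • uu sqq (-(cf sqq Q hQ k)) • nf sqq Q k := by
  rw [leftInv, Finsupp.lift_apply, Finsupp.sum_single_index (by simp)]

lemma leftInv_eval (hQ : Qᵀ = -Q) (z : QuantumTorus R sqq Q) :
    leftInv sqq Q hQ (rep sqq Q hQ z (Finsupp.single 0 1)) = z := by
  have hz := mem_SS sqq Q hQ z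
  induction hz using Submodule.span_induction with
  | mem x hx =>
    obtain ⟨k, rfl⟩ := hx
    rw [cf_spec, leftInv_single, smul_smul, uu_mul, add_neg_cancel, uu_zero, one_smul]
  | zero => simp
  | add x y _ _ hx hy =>
    rw [map_add, LinearMap.add_apply, map_add, hx, hy]
  | smul c x _ hx =>
    rw [map_smul, LinearMap.smul_apply, map_smul, hx]

lemma eval_injective (hQ : Qᵀ = -Q) (z : QuantumTorus R sqq Q)
    (h : rep sqq Q hQ z (Finsupp.single 0 1) = 0) : z = 0 := by
  have := leftInv_eval sqq Q hQ z
  rw [h, map_zero] at this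
  exact this.symm

lemma commute_X_Xinv (i : Fin r) : Commute (X sqq Q i) (Xinv sqq Q i) := by
  unfold Commute SemiconjBy
  rw [X_mul_Xinv, Xinv_mul_X]

section Frobenius
variable (N : ℕ)

lemma smul_antisymm (hQ : Qᵀ = -Q) :
    (((N : ℤ) ^ 2) • Q)ᵀ = -(((N : ℤ) ^ 2) • Q) := by
  rw [Matrix.transpose_smul, hQ, smul_neg]

/-- The Frobenius on the free algebra. -/
noncomputable def frobF : FreeAlgebra R (Fin r ⊕ Fin r) →ₐ[R] QuantumTorus R sqq Q :=
  FreeAlgebra.lift R fun s => gen sqq Q s ^ N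

lemma frobF_rel (hQ : Qᵀ = -Q) : ∀ ⦃x y : FreeAlgebra R (Fin r ⊕ Fin r)⦄,
    QTRel R sqq (((N : ℤ) ^ 2) • Q) x y → frobF sqq Q N x = frobF sqq Q N y := by
  intro x y h
  cases h with
  | mul_inv i =>
    rw [map_mul, map_one]
    unfold frobF
    rw [FreeAlgebra.lift_ι_apply, FreeAlgebra.lift_ι_apply]
    show X sqq Q i ^ N * Xinv sqq Q i ^ N = 1
    rw [← (commute_X_Xinv sqq Q i).mul_pow, X_mul_Xinv, one_pow]
  | inv_mul i =>
    rw [map_mul, map_one]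
    unfold frobF
    rw [FreeAlgebra.lift_ι_apply, FreeAlgebra.lift_ι_apply]
    show Xinv sqq Q i ^ N * X sqq Q i ^ N = 1
    rw [← ((commute_X_Xinv sqq Q i).symm).mul_pow, Xinv_mul_X, one_pow]
  | qcomm i j =>
    rw [map_mul, map_smul, map_mul]
    unfold frobF
    simp only [FreeAlgebra.lift_ι_apply]
    rw [gen_pow_comm sqq Q hQ (Sum.inl i) (Sum.inl j) N N]
    congr 1
    show uu sqq _ = uu sqq _
    congr 1
    simp only [sgn_inl, idx_inl, Matrix.smul_apply, smul_eq_mul]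
    push_cast
    ring

/-- The Frobenius homomorphism. -/
noncomputable def frob (hQ : Qᵀ = -Q) :
    QuantumTorus R sqq (((N : ℤ) ^ 2) • Q) →ₐ[R] QuantumTorus R sqq Q :=
  RingQuot.liftAlgHom R ⟨frobF sqq Q N, frobF_rel sqq Q N hQ⟩

lemma frob_mk' (hQ : Qᵀ = -Q) (y : FreeAlgebra R (Fin r ⊕ Fin r)) :
    frob sqq Q N hQ (mk' sqq (((N : ℤ) ^ 2) • Q) y) = frobF sqq Q N y :=
  RingQuot.liftAlgHom_mkAlgHom_apply R (frobF sqq Q N) (frobF_rel sqq Q N hQ) y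

lemma frob_gen (hQ : Qᵀ = -Q) (s : Fin r ⊕ Fin r) :
    frob sqq Q N hQ (gen sqq (((N : ℤ) ^ 2) • Q) s) = gen sqq Q s ^ N := by
  rw [gen_eq_mk', frob_mk']
  exact FreeAlgebra.lift_ι_apply _ _

/-- `e_k ↦ e_{N k}`. -/
noncomputable def jmap : ((Fin r → ℤ) →₀ R) →ₗ[R] ((Fin r → ℤ) →₀ R) :=
  Finsupp.lmapDomain R R fun k : Fin r → ℤ => (N : ℤ) • k

lemma jmap_single (k : Fin r → ℤ) (b : R) :
    jmap (R := R) N (Finsupp.single k b) = Finsupp.single ((N : ℤ) • k) b := by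
  rw [jmap, Finsupp.lmapDomain_apply, Finsupp.mapDomain_single]

lemma jmap_injective (hN : 0 < N) :
    Function.Injective (jmap (R := R) (r := r) N) := by
  have hinj : Function.Injective (fun k : Fin r → ℤ => (N : ℤ) • k) := by
    intro k k' h
    funext x
    have hx := congrFun h x
    simp only [Pi.smul_apply, smul_eq_mul] at hx
    have hN' : (N : ℤ) ≠ 0 := by exact_mod_cast hN.ne'
    exact mul_left_cancel₀ hN' hx
  intro x y h
  have h2 : Finsupp.mapDomain (fun k : Fin r → ℤ => (N : ℤ) • k) x
      = Finsupp.mapDomain (fun k : Fin r → ℤ => (N : ℤ) • k) y := by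
    simpa [jmap, Finsupp.lmapDomain_apply] using h
  exact Finsupp.mapDomain_injective hinj h2

lemma phi_smulQ (c : ℤ) (i : Fin r) (k : Fin r → ℤ) :
    phi (c • Q) i k = c * phi Q i k := by
  simp only [phi, Matrix.smul_apply, smul_eq_mul, Finset.mul_sum]
  refine Finset.sum_congr rfl fun j _ => ?_
  split_ifs <;> ring

lemma intertwine_gen (hQ : Qᵀ = -Q) (s : Fin r ⊕ Fin r) :
    (aM sqq Q s ^ N) ∘ₗ jmap (R := R) N
      = jmap (R := R) N ∘ₗ aM sqq (((N : ℤ) ^ 2) • Q) s := by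
  refine Finsupp.lhom_ext fun k b => ?_
  rw [LinearMap.comp_apply, LinearMap.comp_apply, jmap_single, aM_pow_single,
    aM_single, jmap_single]
  have he : (N : ℤ) * (sgn s * phi Q (idx s) ((N : ℤ) • k))
      = sgn s * phi (((N : ℤ) ^ 2) • Q) (idx s) k := by
    rw [phi_zsmul, phi_smulQ]
    ring
  rw [he, smul_add]

lemma intertwine (hQ : Qᵀ = -Q) (z : QuantumTorus R sqq (((N : ℤ) ^ 2) • Q)) :
    (rep sqq Q hQ (frob sqq Q N hQ z)) ∘ₗ jmap (R := R) N
      = jmap (R := R) N ∘ₗ rep sqq (((N : ℤ) ^ 2) • Q) (smul_antisymm Q N hQ) z := by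
  obtain ⟨y, rfl⟩ := mk'_surjective sqq (((N : ℤ) ^ 2) • Q) z
  induction y using FreeAlgebra.induction with
  | grade0 c =>
    simp only [AlgHom.commutes, Module.algebraMap_end_eq_smul_id]
    rw [LinearMap.smul_comp, LinearMap.comp_smul, LinearMap.id_comp, LinearMap.comp_id]
  | grade1 x =>
    rw [← gen_eq_mk', frob_gen, map_pow, rep_gen, rep_gen]
    exact intertwine_gen sqq Q N hQ x
  | mul a b ha hb =>
    simp only [map_mul]
    rw [Module.End.mul_eq_comp, Module.End.mul_eq_comp, LinearMap.comp_assoc, hb,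
      ← LinearMap.comp_assoc, ha, LinearMap.comp_assoc]
  | add a b ha hb =>
    simp only [map_add]
    rw [LinearMap.add_comp, LinearMap.comp_add, ha, hb]

end Frobenius
end QTAux


/-- For a positive integer `N` there is an injective `R`-algebra
homomorphism `Φ_N : T(N²Q) → T(Q)`, the `N`-th Frobenius homomorphism, determined by
`Φ_N(x_i) = x_i^N`. -/
theorem quantumTorus_frobenius (R : Type) [CommRing R] (sqq : Rˣ)
    {r : ℕ} (Q : Matrix (Fin r) (Fin r) ℤ) (hQ : Qᵀ = -Q) (N : ℕ) (hN : 0 < N) :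
    ∃ Φ : QuantumTorus R sqq (((N : ℤ) ^ 2) • Q) →ₐ[R] QuantumTorus R sqq Q,
      Function.Injective Φ ∧
        ∀ i : Fin r, Φ (QuantumTorus.X sqq (((N : ℤ) ^ 2) • Q) i) =
          QuantumTorus.X sqq Q i ^ N := by
    classical
  refine ⟨QTAux.frob sqq Q N hQ, ?_, ?_⟩
  · rw [injective_iff_map_eq_zero]
    intro z hz
    have hit := QTAux.intertwine sqq Q N hQ z
    have h0 := congrArg (fun f => f (Finsupp.single (0 : Fin r → ℤ) (1 : R))) hit
    simp only [LinearMap.comp_apply] at h0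
    rw [hz, map_zero, LinearMap.zero_apply] at h0
    have hzero : QTAux.rep sqq (((N : ℤ) ^ 2) • Q) (QTAux.smul_antisymm Q N hQ) z
        (Finsupp.single 0 1) = 0 := by
      apply QTAux.jmap_injective N hN
      rw [← h0, map_zero]
    exact QTAux.eval_injective sqq (((N : ℤ) ^ 2) • Q) (QTAux.smul_antisymm Q N hQ) z hzero
  · intro i
    exact QTAux.frob_gen sqq Q N hQ (Sum.inl i)
end
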